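/- Let (M, m₀) and (Y, y₀) be pointed topological spaces and A an abelian group regarded as a discrete space. If H : M × [0,1] → Y is a pointed homotopy between pointed continuous maps f, g : M → Y (i.e. H is continuous, H(-,0) = f, H(-,1) = g, and H(m₀, t) = y₀ for all t), then the map H' : Sym(M;A) × [0,1] → Sym(Y;A) defined by H'(l, t) = Sym(H(-,t);A)(l) is a continuous pointed homotopy from Sym(f;A) to Sym(g;A). -/

import Mathlib

set_option maxHeartbeats 1000000

/-- Underlying set of the infinite symmetric product: finitely supported
labelings of `M` by `A` vanishing at the basepoint `m₀`. -/
def SymProd (M : Type) (A : Type) [AddCommGroup A] (m₀ : M) : Type := {l : M →₀ A // l m₀ = 0}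

/-- The structure maps `Mⁿ × Aⁿ → SymProd(M;A)`. -/
noncomputable def symF (M : Type) (A : Type) [AddCommGroup A] (m₀ : M) (n : ℕ)
    (c : Fin n → M) (a : Fin n → A) : SymProd M A m₀ :=
  ⟨(∑ i, Finsupp.single (c i) (a i)) - Finsupp.single m₀ ((∑ i, Finsupp.single (c i) (a i)) m₀),
    by simp⟩

/-- The topology on `SymProd(M;A)`: the finest topology making all structure maps
continuous, where `Mⁿ` has the product topology and `Aⁿ` the product of discrete
topologies. -/
noncomputable instance symTop (M : Type) [TopologicalSpace M] (A : Type) [AddCommGroup A]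
    (m₀ : M) : TopologicalSpace (SymProd M A m₀) :=
  ⨆ n : ℕ, TopologicalSpace.coinduced
    (fun p : (Fin n → M) × (Fin n → A) => symF M A m₀ n p.1 p.2)
    (@instTopologicalSpaceProd _ _ inferInstance
      (@Pi.topologicalSpace (Fin n) (fun _ => A) (fun _ => ⊥)))

/-- The basepoint of `SymProd(M;A)`: the zero labeling. -/
def symZero (M : Type) (A : Type) [AddCommGroup A] (m₀ : M) : SymProd M A m₀ := ⟨0, by simp⟩

/-- The pushforward `SymProd(f;A)` of a pointed map `f`. -/
noncomputable def symMap {M Y : Type} (A : Type) [AddCommGroup A] (f : M → Y)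
    (m₀ : M) (y₀ : Y) (l : SymProd M A m₀) : SymProd Y A y₀ :=
  ⟨Finsupp.mapDomain f l.1 - Finsupp.single y₀ (Finsupp.mapDomain f l.1 y₀), by simp⟩

/-- Pointed homotopy of pointed maps. -/
def PtdHomotopic {X Y : Type} [TopologicalSpace X] [TopologicalSpace Y]
    (x₀ : X) (y₀ : Y) (f g : X → Y) : Prop :=
  ∃ H : X × unitInterval → Y, Continuous H ∧ (∀ x, H (x, 0) = f x) ∧ (∀ x, H (x, 1) = g x) ∧
    ∀ t, H (x₀, t) = y₀

/-- Total structure map from the disjoint union. -/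
noncomputable def symQ (M : Type) (A : Type) [AddCommGroup A] (m₀ : M) :
    (Σ n : ℕ, (Fin n → M) × (Fin n → A)) → SymProd M A m₀ :=
  fun p => symF M A m₀ p.1 p.2.1 p.2.2

lemma symQ_surjective (M : Type) (A : Type) [AddCommGroup A] (m₀ : M) :
    Function.Surjective (symQ M A m₀) := by
  classical
  rintro ⟨l, hl⟩
  set n := l.support.card
  set e := l.support.equivFin
  refine ⟨⟨n, fun i => (e.symm i : M), fun i => l (e.symm i : M)⟩, ?_⟩
  have hS : (∑ i : Fin n, Finsupp.single ((e.symm i : M)) (l (e.symm i : M))) = l := by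
    rw [Fintype.sum_equiv e.symm (fun i => Finsupp.single ((e.symm i : M)) (l (e.symm i : M)))
      (fun x : l.support => Finsupp.single (x : M) (l (x : M))) (fun i => rfl)]
    rw [Finset.sum_coe_sort l.support (fun x => Finsupp.single x (l x))]
    exact Finsupp.sum_single l
  apply Subtype.ext
  show (∑ i : Fin n, Finsupp.single ((e.symm i : M)) (l (e.symm i : M))) -
      Finsupp.single m₀ ((∑ i : Fin n, Finsupp.single ((e.symm i : M)) (l (e.symm i : M))) m₀) = l
  rw [hS, hl, Finsupp.single_zero, sub_zero]

lemma symMap_symF {M Y : Type} (A : Type) [AddCommGroup A] (f : M → Y) (m₀ : M) (y₀ : Y)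
    (hf0 : f m₀ = y₀) (n : ℕ) (c : Fin n → M) (a : Fin n → A) :
    symMap A f m₀ y₀ (symF M A m₀ n c a) = symF Y A y₀ n (fun i => f (c i)) a := by
  classical
  apply Subtype.ext
  show Finsupp.mapDomain f (symF M A m₀ n c a).1 -
      Finsupp.single y₀ (Finsupp.mapDomain f (symF M A m₀ n c a).1 y₀) = _
  set S : M →₀ A := ∑ i, Finsupp.single (c i) (a i) with hSdef
  set T : Y →₀ A := ∑ i, Finsupp.single (f (c i)) (a i) with hTdef
  have h1 : (symF M A m₀ n c a).1 = S - Finsupp.single m₀ (S m₀) := rfl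
  have hmapS : Finsupp.mapDomain f S = T := by
    rw [hSdef, hTdef]
    rw [show Finsupp.mapDomain f = ⇑(Finsupp.mapDomain.addMonoidHom f) from rfl, map_sum]
    simp [Finsupp.mapDomain.addMonoidHom_apply, Finsupp.mapDomain_single]
  have hmap : Finsupp.mapDomain f ((symF M A m₀ n c a).1) = T - Finsupp.single y₀ (S m₀) := by
    rw [h1, show Finsupp.mapDomain f = ⇑(Finsupp.mapDomain.addMonoidHom f) from rfl, map_sub]
    rw [show ⇑(Finsupp.mapDomain.addMonoidHom f) = Finsupp.mapDomain f from rfl, hmapS,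
      Finsupp.mapDomain_single, hf0]
  rw [hmap]
  show T - Finsupp.single y₀ (S m₀) -
      Finsupp.single y₀ ((T - Finsupp.single y₀ (S m₀)) y₀) = T - Finsupp.single y₀ (T y₀)
  rw [Finsupp.sub_apply, Finsupp.single_eq_same, Finsupp.single_sub]
  abel

lemma symQ_isQuotientMap (M : Type) [TopologicalSpace M] (A : Type) [AddCommGroup A] (m₀ : M) :
    letI : TopologicalSpace A := ⊥
    Topology.IsQuotientMap (symQ M A m₀) := by
  letI : TopologicalSpace A := ⊥
  refine ⟨⟨?_⟩, symQ_surjective M A m₀⟩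
  show symTop M A m₀ = TopologicalSpace.coinduced (symQ M A m₀) instTopologicalSpaceSigma
  rw [show (instTopologicalSpaceSigma :
      TopologicalSpace (Σ n : ℕ, (Fin n → M) × (Fin n → A))) =
      ⨆ n : ℕ, TopologicalSpace.coinduced (Sigma.mk n) inferInstance from rfl,
    coinduced_iSup]
  simp only [coinduced_compose]
  rfl

/-- If `H : M × [0,1] → Y` is a pointed homotopy between pointed
continuous maps `f, g : M → Y`, then `H'(l,t) = Sym(H(-,t);A)(l)` is a continuous
pointed homotopy from `Sym(f;A)` to `Sym(g;A)`. -/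
theorem symMap_homotopy
    (M Y : Type) [TopologicalSpace M] [TopologicalSpace Y]
    (A : Type) [AddCommGroup A] (m₀ : M) (y₀ : Y)
    (f g : M → Y) (hf : Continuous f) (hg : Continuous g)
    (hf₀ : f m₀ = y₀) (hg₀ : g m₀ = y₀)
    (H : M × unitInterval → Y) (hH : Continuous H)
    (H0 : ∀ x, H (x, 0) = f x) (H1 : ∀ x, H (x, 1) = g x)
    (Hbase : ∀ t, H (m₀, t) = y₀) :
    Continuous (fun p : SymProd M A m₀ × unitInterval =>
        symMap A (fun x => H (x, p.2)) m₀ y₀ p.1) ∧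
    (∀ l : SymProd M A m₀, symMap A (fun x => H (x, 0)) m₀ y₀ l = symMap A f m₀ y₀ l) ∧
    (∀ l : SymProd M A m₀, symMap A (fun x => H (x, 1)) m₀ y₀ l = symMap A g m₀ y₀ l) ∧
    (∀ t : unitInterval, symMap A (fun x => H (x, t)) m₀ y₀ (symZero M A m₀) = symZero Y A y₀) := by
  classical
  refine ⟨?_, ?_, ?_, ?_⟩
  · letI : TopologicalSpace A := ⊥
    have hq := symQ_isQuotientMap M A m₀
    apply hq.continuous_lift_prod_left
    have key : (fun p : (Σ n : ℕ, (Fin n → M) × (Fin n → A)) × unitInterval =>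
        symMap A (fun x => H (x, p.2)) m₀ y₀ (symQ M A m₀ p.1)) =
        fun p => symF Y A y₀ p.1.1 (fun i => H (p.1.2.1 i, p.2)) p.1.2.2 := by
      funext p
      obtain ⟨⟨n, c, a⟩, t⟩ := p
      exact symMap_symF A _ m₀ y₀ (Hbase t) n c a
    rw [key]
    have hcomp : ∀ n : ℕ, Continuous (fun q : ((Fin n → M) × (Fin n → A)) × unitInterval =>
        symF Y A y₀ n (fun i => H (q.1.1 i, q.2)) q.1.2) := by
      intro n
      have hfY : Continuous (fun p : (Fin n → Y) × (Fin n → A) => symF Y A y₀ n p.1 p.2) := by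
        have : symTop Y A y₀ = ⨆ n : ℕ, TopologicalSpace.coinduced
            (fun p : (Fin n → Y) × (Fin n → A) => symF Y A y₀ n p.1 p.2)
            (@instTopologicalSpaceProd _ _ inferInstance
              (@Pi.topologicalSpace (Fin n) (fun _ => A) (fun _ => ⊥))) := rfl
        exact continuous_iSup_rng (i := n) continuous_coinduced_rng
      have hG : Continuous (fun q : ((Fin n → M) × (Fin n → A)) × unitInterval =>
          ((fun i => H (q.1.1 i, q.2), q.1.2) : (Fin n → Y) × (Fin n → A))) := by
        refine Continuous.prodMk (continuous_pi fun i => ?_) continuous_fst.snd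
        exact hH.comp (((continuous_apply i).comp continuous_fst.fst).prodMk continuous_snd)
      exact hfY.comp hG
    have hsig : Continuous (fun q : Σ n : ℕ, (((Fin n → M) × (Fin n → A)) × unitInterval) =>
        symF Y A y₀ q.1 (fun i => H (q.2.1.1 i, q.2.2)) q.2.1.2) :=
      continuous_sigma fun n => hcomp n
    have h2 := hsig.comp (Homeomorph.sigmaProdDistrib
      (X := fun n : ℕ => (Fin n → M) × (Fin n → A)) (Y := unitInterval)).continuous
    convert h2 using 1
    funext p
    rfl
  · intro l
    rw [show (fun x => H (x, 0)) = f from funext H0]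
  · intro l
    rw [show (fun x => H (x, 1)) = g from funext H1]
  · intro t
    apply Subtype.ext
    show Finsupp.mapDomain _ (0 : M →₀ A) -
      Finsupp.single y₀ (Finsupp.mapDomain _ (0 : M →₀ A) y₀) = 0
    simp
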